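/- Let (A, B, C) be a positive solution of the backward cross curvature flow ODE system (X⁻) on an interval I, and define a = A/B and c = C/B on I. Then a and c satisfy da/dt = (8/(B a c)²) · a(a+1)(a+c−1)·φ₃ and dc/dt = −(8/(B a c)²) · c(1−c)(a+c+1)·φ₁ on I, where φ₁ = −3a²+1+c²−2c−2ac−2a and φ₃ = −3c²+a²+1+2c−2ac+2a. -/

import Mathlib

open Real Filter Set Topology

/-- `F₁ = -3A² + B² + C² - 2BC - 2AC - 2AB`. -/
noncomputable def F1 (A B C : ℝ) : ℝ :=
  -3 * A ^ 2 + B ^ 2 + C ^ 2 - 2 * B * C - 2 * A * C - 2 * A * B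

/-- `F₂ = -3B² + A² + C² + 2BC + 2AC - 2AB`. -/
noncomputable def F2 (A B C : ℝ) : ℝ :=
  -3 * B ^ 2 + A ^ 2 + C ^ 2 + 2 * B * C + 2 * A * C - 2 * A * B

/-- `F₃ = -3C² + A² + B² + 2BC - 2AC + 2AB`. -/
noncomputable def F3 (A B C : ℝ) : ℝ :=
  -3 * C ^ 2 + A ^ 2 + B ^ 2 + 2 * B * C - 2 * A * C + 2 * A * B

/-- `(A, B, C)` is a positive solution of the backward cross curvature flow ODE
system (X⁻) on the set `I`. -/
def IsBackwardXCFSolOn (A B C : ℝ → ℝ) (I : Set ℝ) : Prop :=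
  ∀ t ∈ I, 0 < A t ∧ 0 < B t ∧ 0 < C t ∧
    HasDerivAt A (2 * A t * F2 (A t) (B t) (C t) * F3 (A t) (B t) (C t) /
      (A t * B t * C t) ^ 2) t ∧
    HasDerivAt B (2 * B t * F3 (A t) (B t) (C t) * F1 (A t) (B t) (C t) /
      (A t * B t * C t) ^ 2) t ∧
    HasDerivAt C (2 * C t * F1 (A t) (B t) (C t) * F2 (A t) (B t) (C t) /
      (A t * B t * C t) ^ 2) t

/-- `φ₁ = -3a² + 1 + c² - 2c - 2ac - 2a`. -/
noncomputable def phi1 (a c : ℝ) : ℝ :=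
  -3 * a ^ 2 + 1 + c ^ 2 - 2 * c - 2 * a * c - 2 * a

/-- `φ₃ = -3c² + a² + 1 + 2c - 2ac + 2a`. -/
noncomputable def phi3 (a c : ℝ) : ℝ :=
  -3 * c ^ 2 + a ^ 2 + 1 + 2 * c - 2 * a * c + 2 * a

/-- Projectivization of the backward cross curvature flow (X⁻): the ratios `a = A/B` and
`c = C/B` satisfy `da/dt = (8/(Bac)²) a(a+1)(a+c-1)φ₃` and
`dc/dt = -(8/(Bac)²) c(1-c)(a+c+1)φ₁`. -/
theorem backward_xcf_ratio_ode (A B C : ℝ → ℝ) (I : Set ℝ)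
    (hsol : IsBackwardXCFSolOn A B C I) :
    ∀ t ∈ I,
      HasDerivAt (fun s => A s / B s)
        (8 / (B t * (A t / B t) * (C t / B t)) ^ 2 * ((A t / B t) * (A t / B t + 1) *
          (A t / B t + C t / B t - 1)) * phi3 (A t / B t) (C t / B t)) t ∧
      HasDerivAt (fun s => C s / B s)
        (-(8 / (B t * (A t / B t) * (C t / B t)) ^ 2) * ((C t / B t) * (1 - C t / B t) *
          (A t / B t + C t / B t + 1)) * phi1 (A t / B t) (C t / B t)) t := by
  intro t ht
  obtain ⟨hA, hB, hC, hA', hB', hC'⟩ := hsol t ht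
  constructor
  · have h : HasDerivAt (fun s => A s / B s) _ t := hA'.div hB' hB.ne'
    convert h using 1
    simp only [F1, F2, F3, phi3]
    field_simp
    ring
  · have h : HasDerivAt (fun s => C s / B s) _ t := hC'.div hB' hB.ne'
    convert h using 1
    simp only [F1, F2, F3, phi1]
    field_simp
    ring
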